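/- arXiv:2007.10046 — 5 statements merged into one kernel-verified Lean document; each statement's English description precedes it below -/
import Mathlib

section
/- Let Â, S be real n×n matrices, T invertible, G diagonal positive definite, with S symmetric and T⁻¹ Â T = G⁻¹ S. Then the matrix M = T G⁻¹ Tᵀ is positive definite and satisfies Â M = M Âᵀ. -/
open Matrix

theorem stmt_1 {n : ℕ} (Ahat T S G : Matrix (Fin n) (Fin n) ℝ)
    (hT : IsUnit T.det) (hS : S.IsSymm)
    (g : Fin n → ℝ) (hg : ∀ i, 0 < g i) (hG : G = Matrix.diagonal g)
    (h : T⁻¹ * Ahat * T = G⁻¹ * S) :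
    (T * G⁻¹ * Tᵀ).PosDef ∧ Ahat * (T * G⁻¹ * Tᵀ) = (T * G⁻¹ * Tᵀ) * Ahatᵀ := by
  have hGinv : G⁻¹ = Matrix.diagonal (fun i => (g i)⁻¹) := by
    rw [hG]
    apply Matrix.inv_eq_right_inv
    rw [Matrix.diagonal_mul_diagonal,
      show (fun i => g i * (g i)⁻¹) = fun _ => (1:ℝ) from
        funext fun i => mul_inv_cancel₀ (hg i).ne', Matrix.diagonal_one]
  have hGpd : (G⁻¹).PosDef := by
    rw [hGinv]
    exact Matrix.PosDef.diagonal (fun i => inv_pos.mpr (hg i))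
  have hTt : IsUnit Tᵀ.det := by simpa [Matrix.det_transpose] using hT
  have hB : T = Tᵀᴴ := by
    rw [conjTranspose_eq_transpose_of_trivial, transpose_transpose]
  have hMpd : (T * G⁻¹ * Tᵀ).PosDef := by
    rw [hB]
    refine Matrix.PosDef.of_dotProduct_mulVec_pos (Matrix.isHermitian_conjTranspose_mul_mul _ hGpd.1) fun x hx => ?_
    have hx' : Tᵀ *ᵥ x ≠ 0 := by
      intro h0
      apply hx
      have := congrArg (fun v => Tᵀ⁻¹ *ᵥ v) h0
      simpa [Matrix.mulVec_mulVec, Matrix.nonsing_inv_mul _ hTt] using this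
    simpa only [star_mulVec, dotProduct_mulVec, vecMul_vecMul, conjTranspose_eq_transpose_of_trivial, transpose_transpose] using hGpd.dotProduct_mulVec_pos hx'
  refine ⟨hMpd, ?_⟩
  have hA : Ahat = T * (G⁻¹ * S) * T⁻¹ := by
    rw [← h]
    rw [show T * (T⁻¹ * Ahat * T) * T⁻¹ = (T * T⁻¹) * Ahat * (T * T⁻¹) by
      simp only [Matrix.mul_assoc]]
    rw [Matrix.mul_nonsing_inv _ hT]
    simp
  have hGsym : (G⁻¹)ᵀ = G⁻¹ := by rw [hGinv, Matrix.diagonal_transpose]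
  rw [hA]
  rw [Matrix.transpose_mul, Matrix.transpose_mul, Matrix.transpose_mul,
    Matrix.transpose_nonsing_inv, hGsym, hS.eq]
  calc T * (G⁻¹ * S) * T⁻¹ * (T * G⁻¹ * Tᵀ)
      = T * G⁻¹ * S * (T⁻¹ * T) * (G⁻¹ * Tᵀ) := by
        simp only [Matrix.mul_assoc]
    _ = T * G⁻¹ * S * G⁻¹ * Tᵀ := by
        rw [Matrix.nonsing_inv_mul _ hT]; simp [Matrix.mul_assoc]
    _ = T * G⁻¹ * (Tᵀ * (Tᵀ)⁻¹) * (S * (G⁻¹ * Tᵀ)) := by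
        rw [Matrix.mul_nonsing_inv _ hTt]; simp [Matrix.mul_assoc]
    _ = T * G⁻¹ * Tᵀ * ((Tᵀ)⁻¹ * (S * G⁻¹ * Tᵀ)) := by
        simp only [Matrix.mul_assoc]
end

section
/- Let Â = V Λ V⁻¹ with V invertible and Λ diagonal (a diagonalization of Â), and let M be a real n×n matrix. Then Â M = M Âᵀ if and only if there exists a matrix D commuting with Λ such that M = V D Vᵀ. -/
open Matrix

theorem stmt_5 {n : ℕ} (Ahat V M : Matrix (Fin n) (Fin n) ℝ)
    (l : Fin n → ℝ) (hV : IsUnit V.det)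
    (hA : Ahat = V * Matrix.diagonal l * V⁻¹) :
    Ahat * M = M * Ahatᵀ ↔
      ∃ D : Matrix (Fin n) (Fin n) ℝ,
        D * Matrix.diagonal l = Matrix.diagonal l * D ∧ M = V * D * Vᵀ := by
  haveI : Invertible V := V.invertibleOfIsUnitDet hV
  haveI : Invertible Vᵀ := Vᵀ.invertibleOfIsUnitDet (by simpa using hV)
  have hVt : V⁻¹ᵀ = Vᵀ⁻¹ := V.transpose_nonsing_inv
  constructor
  · intro h
    refine ⟨V⁻¹ * M * Vᵀ⁻¹, ?_, ?_⟩
    · have h' : V * Matrix.diagonal l * V⁻¹ * M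
          = M * (Vᵀ⁻¹ * Matrix.diagonal l * Vᵀ) := by
        have h' := h
        rw [hA] at h'
        simpa [Matrix.transpose_mul, hVt, Matrix.mul_assoc] using h'
      calc V⁻¹ * M * Vᵀ⁻¹ * Matrix.diagonal l
          = V⁻¹ * (M * (Vᵀ⁻¹ * Matrix.diagonal l * Vᵀ)) * Vᵀ⁻¹ := by
            simp [Matrix.mul_assoc, Matrix.mul_inv_cancel_right_of_invertible]
        _ = V⁻¹ * (V * Matrix.diagonal l * V⁻¹ * M) * Vᵀ⁻¹ := by rw [h']
        _ = Matrix.diagonal l * (V⁻¹ * M * Vᵀ⁻¹) := by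
            simp [Matrix.mul_assoc, Matrix.inv_mul_cancel_left_of_invertible]
    · simp [Matrix.mul_assoc, Matrix.mul_inv_cancel_left_of_invertible,
        Matrix.inv_mul_cancel_right_of_invertible]
  · rintro ⟨D, hD, rfl⟩
    subst hA
    calc V * Matrix.diagonal l * V⁻¹ * (V * D * Vᵀ)
        = V * (Matrix.diagonal l * D) * Vᵀ := by
          simp [Matrix.mul_assoc, Matrix.inv_mul_cancel_left_of_invertible]
      _ = V * (D * Matrix.diagonal l) * Vᵀ := by rw [hD]
      _ = V * D * Vᵀ * (V * Matrix.diagonal l * V⁻¹)ᵀ := by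
          simp [Matrix.transpose_mul, hVt, Matrix.mul_assoc,
            Matrix.inv_mul_cancel_left_of_invertible]
end

section
/- Let Z, W be real n×m matrices with Zᵀ Z = Wᵀ W, Q a real n×n matrix, and L a real m×r matrix such that Z L has full column rank and the column space of Z L equals the column space of Z. Then Q Z = W if and only if Q Z L = W L. -/
open Matrix

theorem stmt_9 {n m r : ℕ} (Z W : Matrix (Fin n) (Fin m) ℝ)
    (Q : Matrix (Fin n) (Fin n) ℝ) (L : Matrix (Fin m) (Fin r) ℝ)
    (hZW : Zᵀ * Z = Wᵀ * W)
    (hfull : LinearIndependent ℝ (fun j : Fin r => (Z * L)ᵀ j))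
    (hrange : LinearMap.range (Z * L).mulVecLin = LinearMap.range Z.mulVecLin) :
    Q * Z = W ↔ Q * (Z * L) = W * L := by
  constructor
  · intro h
    rw [← Matrix.mul_assoc, h]
  · intro h
    -- each column of Z is in the range of (Z*L).mulVecLin
    have hcol : ∀ i : Fin m, ∃ v : Fin r → ℝ, (Z * L).mulVec v = Z.mulVec (Pi.single i 1) := by
      intro i
      have : Z.mulVec (Pi.single i 1) ∈ LinearMap.range (Z * L).mulVecLin := by
        rw [hrange]
        exact ⟨Pi.single i 1, rfl⟩
      obtain ⟨v, hv⟩ := this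
      exact ⟨v, hv⟩
    choose v hv using hcol
    set M : Matrix (Fin r) (Fin m) ℝ := Matrix.of (fun j i => v i j) with hM
    have hZN : Z * (L * M) = Z := by
      rw [← Matrix.mul_assoc]
      ext k i
      have := congrFun (hv i) k
      simp only [Matrix.mulVec, dotProduct] at this
      rw [Matrix.mul_apply]
      simp only [hM, Matrix.of_apply]
      rw [this]
      simp [Pi.single_apply]
    set N : Matrix (Fin m) (Fin m) ℝ := L * M with hN
    have hWN1 : Wᵀ * (W * N) = Wᵀ * W := by
      rw [← Matrix.mul_assoc, ← hZW, Matrix.mul_assoc, hZN]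
    have key : (W * N - W)ᵀ * (W * N - W) = 0 := by
      have expand : (W * N - W)ᵀ * (W * N - W)
          = Nᵀ * (Wᵀ * (W * N)) - Nᵀ * (Wᵀ * W) - (Wᵀ * (W * N)) + Wᵀ * W := by
        simp only [Matrix.transpose_sub, Matrix.transpose_mul, Matrix.sub_mul,
          Matrix.mul_sub, Matrix.mul_assoc]
        abel
      rw [expand, hWN1]
      abel
    have hWN : W * N = W := by
      have : (W * N - W)ᴴ * (W * N - W) = 0 := by
        simpa using key
      exact sub_eq_zero.mp (Matrix.conjTranspose_mul_self_eq_zero.mp this)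
    have hQ : Q * Z = Q * (Z * N) := by rw [hZN]
    rw [hQ, hN, ← Matrix.mul_assoc Z L M, ← Matrix.mul_assoc Q (Z * L) M, h,
      Matrix.mul_assoc, ← hN, hWN]
end

section
/- Let A, B ∈ ℝ^{n×m} with Aᵀ A = Bᵀ B and rank A = m < n. Let Ā ∈ ℝ^{n×(n−m)} and B̄ ∈ ℝ^{n×(n−m)} satisfy Āᵀ Ā = I, B̄ᵀ B̄ = I, B̄ᵀ B = 0, Āᵀ A = 0. Then for any Q ∈ ℝ^{n×n}: Q is orthogonal with Q A = B if and only if there exists U ∈ O(n−m) with Q = B A⁺ + B̄ U Āᵀ, where A⁺ = (Aᵀ A)⁻¹ Aᵀ is the left pseudoinverse of A. -/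
open Matrix

lemma my_isUnit_of_rank_eq {k : ℕ} (M : Matrix (Fin k) (Fin k) ℝ) (h : M.rank = k) :
    IsUnit M := by
  rw [← Matrix.mulVec_surjective_iff_isUnit]
  have hsurj : Function.Surjective M.mulVecLin := by
    rw [← LinearMap.range_eq_top]
    apply Submodule.eq_top_of_finrank_eq
    rw [← Matrix.rank, h]
    simp
  exact hsurj

lemma my_key {n m : ℕ} (A : Matrix (Fin n) (Fin m) ℝ)
    (Abar : Matrix (Fin n) (Fin (n - m)) ℝ) (hmn : m ≤ n)
    (hU : IsUnit (Aᵀ * A)) (hAbar : Abarᵀ * Abar = 1) (hAo : Abarᵀ * A = 0) :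
    A * ((Aᵀ * A)⁻¹ * Aᵀ) + Abar * Abarᵀ = 1 := by
  have hdet : IsUnit (Aᵀ * A).det := (Matrix.isUnit_iff_isUnit_det _).mp hU
  have hinv : (Aᵀ * A)⁻¹ * (Aᵀ * A) = 1 := Matrix.nonsing_inv_mul _ hdet
  have hAoT : Aᵀ * Abar = 0 := by
    have := congrArg Matrix.transpose hAo
    simpa using this
  set e : Fin m ⊕ Fin (n - m) ≃ Fin n :=
    finSumFinEquiv.trans (finCongr (Nat.add_sub_cancel' hmn)) with he
  set M : Matrix (Fin n) (Fin m ⊕ Fin (n - m)) ℝ := fromCols A Abar with hM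
  set N : Matrix (Fin n) (Fin n) ℝ := M.submatrix id e.symm with hN
  have hMM : Mᵀ * M = fromBlocks (Aᵀ * A) 0 0 1 := by
    rw [hM, transpose_fromCols, fromRows_mul_fromCols, hAbar, hAo, hAoT]
  have hNN : Nᵀ * N = (Mᵀ * M).submatrix e.symm e.symm := by
    rw [hN, transpose_submatrix]
    exact Matrix.submatrix_mul_equiv Mᵀ M ⇑e.symm (Equiv.refl (Fin n)) ⇑e.symm
  have hdetN : IsUnit N.det := by
    have h1 : (Nᵀ * N).det = (Aᵀ * A).det := by
      rw [hNN]
      rw [show (Mᵀ * M).submatrix e.symm e.symm = (Mᵀ * M).submatrix e.symm e.symm from rfl]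
      rw [Matrix.det_submatrix_equiv_self, hMM, Matrix.det_fromBlocks_zero₂₁]
      simp
    have h2 : N.det * N.det = (Aᵀ * A).det := by
      rw [← h1, Matrix.det_mul, Matrix.det_transpose]
    have : IsUnit (N.det * N.det) := h2 ▸ hdet
    exact isUnit_of_mul_isUnit_left (by rwa [mul_comm] at this)
  have hSM : (A * ((Aᵀ * A)⁻¹ * Aᵀ) + Abar * Abarᵀ) * M = M := by
    rw [hM, Matrix.add_mul, mul_fromCols, mul_fromCols]
    rw [show A * ((Aᵀ * A)⁻¹ * Aᵀ) * A = A * ((Aᵀ * A)⁻¹ * (Aᵀ * A)) by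
      simp only [Matrix.mul_assoc]]
    rw [show A * ((Aᵀ * A)⁻¹ * Aᵀ) * Abar = A * ((Aᵀ * A)⁻¹ * (Aᵀ * Abar)) by
      simp only [Matrix.mul_assoc]]
    rw [show Abar * Abarᵀ * A = Abar * (Abarᵀ * A) by simp only [Matrix.mul_assoc]]
    rw [show Abar * Abarᵀ * Abar = Abar * (Abarᵀ * Abar) by simp only [Matrix.mul_assoc]]
    rw [hinv, hAoT, hAo, hAbar]
    ext i (j | j) <;> simp [fromCols]
  have hSN : (A * ((Aᵀ * A)⁻¹ * Aᵀ) + Abar * Abarᵀ) * N = N := by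
    have := congrArg (fun X => X.submatrix (id : Fin n → Fin n) ⇑e.symm) hSM
    rw [← Matrix.submatrix_mul_equiv _ _ _ (Equiv.refl (Fin n)) _] at this
    simpa [hN] using this
  calc A * ((Aᵀ * A)⁻¹ * Aᵀ) + Abar * Abarᵀ
      = (A * ((Aᵀ * A)⁻¹ * Aᵀ) + Abar * Abarᵀ) * (N * N⁻¹) := by
        rw [Matrix.mul_nonsing_inv _ hdetN, Matrix.mul_one]
    _ = ((A * ((Aᵀ * A)⁻¹ * Aᵀ) + Abar * Abarᵀ) * N) * N⁻¹ := by
        rw [Matrix.mul_assoc]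
    _ = N * N⁻¹ := by rw [hSN]
    _ = 1 := Matrix.mul_nonsing_inv _ hdetN

theorem stmt_10 {n m : ℕ} (A B : Matrix (Fin n) (Fin m) ℝ)
    (Abar Bbar : Matrix (Fin n) (Fin (n - m)) ℝ)
    (hAB : Aᵀ * A = Bᵀ * B) (hrank : A.rank = m) (hmn : m < n)
    (hAbar : Abarᵀ * Abar = 1) (hBbar : Bbarᵀ * Bbar = 1)
    (hBo : Bbarᵀ * B = 0) (hAo : Abarᵀ * A = 0)
    (Q : Matrix (Fin n) (Fin n) ℝ) :
    (Qᵀ * Q = 1 ∧ Q * A = B) ↔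
      ∃ U : Matrix (Fin (n - m)) (Fin (n - m)) ℝ,
        Uᵀ * U = 1 ∧ Q = B * ((Aᵀ * A)⁻¹ * Aᵀ) + Bbar * U * Abarᵀ := by
  have hU : IsUnit (Aᵀ * A) := by
    apply my_isUnit_of_rank_eq
    rw [Matrix.rank_transpose_mul_self, hrank]
  have hdet : IsUnit (Aᵀ * A).det := (Matrix.isUnit_iff_isUnit_det _).mp hU
  have hinv : (Aᵀ * A)⁻¹ * (Aᵀ * A) = 1 := Matrix.nonsing_inv_mul _ hdet
  have hinvT : ((Aᵀ * A)⁻¹)ᵀ = (Aᵀ * A)⁻¹ := by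
    rw [Matrix.transpose_nonsing_inv]
    congr 1
    rw [Matrix.transpose_mul, Matrix.transpose_transpose]
  have hA1 : A * ((Aᵀ * A)⁻¹ * Aᵀ) + Abar * Abarᵀ = 1 :=
    my_key A Abar hmn.le hU hAbar hAo
  have hUB : IsUnit (Bᵀ * B) := hAB ▸ hU
  have hB1 : B * ((Aᵀ * A)⁻¹ * Bᵀ) + Bbar * Bbarᵀ = 1 := by
    have := my_key B Bbar hmn.le hUB hBbar hBo
    rwa [← hAB] at this
  have hBoT : Bᵀ * Bbar = 0 := by
    have := congrArg Matrix.transpose hBo; simpa using this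
  have hAoT : Aᵀ * Abar = 0 := by
    have := congrArg Matrix.transpose hAo; simpa using this
  constructor
  · rintro ⟨hQ, hQA⟩
    refine ⟨Bbarᵀ * Q * Abar, ?_, ?_⟩
    · -- orthogonality of U
      have hQtB : Qᵀ * B = A := by rw [← hQA, ← Matrix.mul_assoc, hQ, Matrix.one_mul]
      have hBtQ : Bᵀ * Q = Aᵀ := by
        have := congrArg Matrix.transpose hQtB
        simpa [Matrix.transpose_mul] using this
      have hQAbar : Q * Abar = Bbar * (Bbarᵀ * Q * Abar) := by
        calc Q * Abar = (1 : Matrix (Fin n) (Fin n) ℝ) * (Q * Abar) := by rw [Matrix.one_mul]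
          _ = (B * ((Aᵀ * A)⁻¹ * Bᵀ) + Bbar * Bbarᵀ) * (Q * Abar) := by rw [hB1]
          _ = B * ((Aᵀ * A)⁻¹ * (Bᵀ * Q * Abar)) + Bbar * (Bbarᵀ * Q * Abar) := by
              rw [Matrix.add_mul]; simp only [Matrix.mul_assoc]
          _ = Bbar * (Bbarᵀ * Q * Abar) := by
              rw [hBtQ, hAoT]; simp
      calc (Bbarᵀ * Q * Abar)ᵀ * (Bbarᵀ * Q * Abar)
          = (Bbar * (Bbarᵀ * Q * Abar))ᵀ * (Bbar * (Bbarᵀ * Q * Abar)) := by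
            simp only [Matrix.transpose_mul, Matrix.mul_assoc]
            rw [show Bbarᵀ * (Bbar * (Bbarᵀ * (Q * Abar))) =
              (Bbarᵀ * Bbar) * (Bbarᵀ * (Q * Abar)) by simp only [Matrix.mul_assoc], hBbar,
              Matrix.one_mul]
        _ = (Q * Abar)ᵀ * (Q * Abar) := by rw [← hQAbar]
        _ = Abarᵀ * (Qᵀ * Q) * Abar := by
            simp only [Matrix.transpose_mul, Matrix.mul_assoc]
        _ = 1 := by rw [hQ, Matrix.mul_one, hAbar]
    · have hQAbar : Q * Abar = Bbar * (Bbarᵀ * Q * Abar) := by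
        have hQtB : Qᵀ * B = A := by rw [← hQA, ← Matrix.mul_assoc, hQ, Matrix.one_mul]
        have hBtQ : Bᵀ * Q = Aᵀ := by
          have := congrArg Matrix.transpose hQtB
          simpa [Matrix.transpose_mul] using this
        calc Q * Abar = (1 : Matrix (Fin n) (Fin n) ℝ) * (Q * Abar) := by rw [Matrix.one_mul]
          _ = (B * ((Aᵀ * A)⁻¹ * Bᵀ) + Bbar * Bbarᵀ) * (Q * Abar) := by rw [hB1]
          _ = B * ((Aᵀ * A)⁻¹ * (Bᵀ * Q * Abar)) + Bbar * (Bbarᵀ * Q * Abar) := by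
              rw [Matrix.add_mul]; simp only [Matrix.mul_assoc]
          _ = Bbar * (Bbarᵀ * Q * Abar) := by
              rw [hBtQ, hAoT]; simp
      calc Q = Q * 1 := by rw [Matrix.mul_one]
        _ = Q * (A * ((Aᵀ * A)⁻¹ * Aᵀ) + Abar * Abarᵀ) := by rw [hA1]
        _ = (Q * A) * ((Aᵀ * A)⁻¹ * Aᵀ) + (Q * Abar) * Abarᵀ := by
            rw [Matrix.mul_add]; simp only [Matrix.mul_assoc]
        _ = B * ((Aᵀ * A)⁻¹ * Aᵀ) + Bbar * (Bbarᵀ * Q * Abar) * Abarᵀ := by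
            rw [hQA, hQAbar]
        _ = B * ((Aᵀ * A)⁻¹ * Aᵀ) + Bbar * (Bbarᵀ * Q * Abar) * Abarᵀ := rfl
  · rintro ⟨U, hUU, rfl⟩
    constructor
    · have hT : (B * ((Aᵀ * A)⁻¹ * Aᵀ) + Bbar * U * Abarᵀ)ᵀ =
          A * ((Aᵀ * A)⁻¹ * Bᵀ) + Abar * Uᵀ * Bbarᵀ := by
        simp only [Matrix.transpose_add, Matrix.transpose_mul, Matrix.transpose_transpose,
          hinvT, Matrix.mul_assoc]
      rw [hT, Matrix.add_mul, Matrix.mul_add, Matrix.mul_add]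
      have e1 : A * ((Aᵀ * A)⁻¹ * Bᵀ) * (B * ((Aᵀ * A)⁻¹ * Aᵀ)) =
          A * ((Aᵀ * A)⁻¹ * Aᵀ) := by
        calc A * ((Aᵀ * A)⁻¹ * Bᵀ) * (B * ((Aᵀ * A)⁻¹ * Aᵀ))
            = A * ((Aᵀ * A)⁻¹ * ((Bᵀ * B) * ((Aᵀ * A)⁻¹ * Aᵀ))) := by
              simp only [Matrix.mul_assoc]
          _ = A * (((Aᵀ * A)⁻¹ * (Aᵀ * A)) * ((Aᵀ * A)⁻¹ * Aᵀ)) := by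
              rw [hAB]; simp only [Matrix.mul_assoc]
          _ = A * ((Aᵀ * A)⁻¹ * Aᵀ) := by rw [hinv, Matrix.one_mul]
      have e2 : A * ((Aᵀ * A)⁻¹ * Bᵀ) * (Bbar * U * Abarᵀ) = 0 := by
        calc A * ((Aᵀ * A)⁻¹ * Bᵀ) * (Bbar * U * Abarᵀ)
            = A * ((Aᵀ * A)⁻¹ * ((Bᵀ * Bbar) * (U * Abarᵀ))) := by
              simp only [Matrix.mul_assoc]
          _ = 0 := by rw [hBoT]; simp
      have e3 : Abar * Uᵀ * Bbarᵀ * (B * ((Aᵀ * A)⁻¹ * Aᵀ)) = 0 := by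
        calc Abar * Uᵀ * Bbarᵀ * (B * ((Aᵀ * A)⁻¹ * Aᵀ))
            = Abar * (Uᵀ * ((Bbarᵀ * B) * ((Aᵀ * A)⁻¹ * Aᵀ))) := by
              simp only [Matrix.mul_assoc]
          _ = 0 := by rw [hBo]; simp
      have e4 : Abar * Uᵀ * Bbarᵀ * (Bbar * U * Abarᵀ) = Abar * Abarᵀ := by
        calc Abar * Uᵀ * Bbarᵀ * (Bbar * U * Abarᵀ)
            = Abar * ((Uᵀ * ((Bbarᵀ * Bbar) * U)) * Abarᵀ) := by
              simp only [Matrix.mul_assoc]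
          _ = Abar * ((Uᵀ * U) * Abarᵀ) := by rw [hBbar, Matrix.one_mul]
          _ = Abar * Abarᵀ := by rw [hUU, Matrix.one_mul]
      rw [e1, e2, e3, e4, add_zero, zero_add]
      exact hA1
    · rw [Matrix.add_mul]
      have e5 : B * ((Aᵀ * A)⁻¹ * Aᵀ) * A = B := by
        calc B * ((Aᵀ * A)⁻¹ * Aᵀ) * A = B * ((Aᵀ * A)⁻¹ * (Aᵀ * A)) := by
              simp only [Matrix.mul_assoc]
          _ = B := by rw [hinv, Matrix.mul_one]
      have e6 : Bbar * U * Abarᵀ * A = 0 := by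
        calc Bbar * U * Abarᵀ * A = Bbar * (U * (Abarᵀ * A)) := by
              simp only [Matrix.mul_assoc]
          _ = 0 := by rw [hAo]; simp
      rw [e5, e6, add_zero]
end

section
/- Let P be symmetric positive definite with P⁻¹ Â P symmetric, Q orthogonal, and G diagonal positive definite. Setting T = P Q √G (where √G is the diagonal matrix of square roots of the diagonal of G), the matrix G T⁻¹ Â T is symmetric. -/
open Matrix

theorem stmt_15 {n : ℕ} (Ahat P Q G : Matrix (Fin n) (Fin n) ℝ)
    (hP : P.PosDef) (hsym : (P⁻¹ * Ahat * P).IsSymm)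
    (hQ : Qᵀ * Q = 1)
    (g : Fin n → ℝ) (hg : ∀ i, 0 < g i) (hG : G = Matrix.diagonal g) :
    (G * (P * Q * Matrix.diagonal (fun i => Real.sqrt (g i)))⁻¹ * Ahat *
        (P * Q * Matrix.diagonal (fun i => Real.sqrt (g i)))).IsSymm := by
  set D : Matrix (Fin n) (Fin n) ℝ := Matrix.diagonal (fun i => Real.sqrt (g i)) with hD
  have hDD : D * D = G := by
    rw [hD, Matrix.diagonal_mul_diagonal, hG]
    exact congrArg Matrix.diagonal (funext fun i => Real.mul_self_sqrt (hg i).le)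
  have hDdet : D.det ≠ 0 := by
    rw [hD, Matrix.det_diagonal]
    exact Finset.prod_ne_zero_iff.2 fun i _ =>
      ne_of_gt (Real.sqrt_pos.2 (hg i))
  have hQinv : Q⁻¹ = Qᵀ := Matrix.inv_eq_left_inv hQ
  have hGD : G * D⁻¹ = D := by
    rw [← hDD, Matrix.mul_assoc, Matrix.mul_nonsing_inv D (isUnit_iff_ne_zero.2 hDdet), Matrix.mul_one]
  have hPinv := hP.1.eq
  have key : G * (P * Q * D)⁻¹ * Ahat * (P * Q * D)
      = D * (Qᵀ * (P⁻¹ * Ahat * P) * Q) * D := by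
    rw [Matrix.mul_inv_rev, Matrix.mul_inv_rev, hQinv]
    rw [show G * (D⁻¹ * (Qᵀ * P⁻¹)) = G * D⁻¹ * Qᵀ * P⁻¹ by
      simp [Matrix.mul_assoc], hGD]
    simp [Matrix.mul_assoc]
  rw [Matrix.IsSymm, key]
  have hM := hsym
  set M := P⁻¹ * Ahat * P with hMdef
  rw [Matrix.IsSymm] at hM
  simp only [Matrix.transpose_mul, Matrix.transpose_transpose, hD,
    Matrix.diagonal_transpose, hM, Matrix.mul_assoc]
end
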